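/- Let A be a stable matching instance and B obtained from A by permuting the preference list of exactly one firm f (all other agents unchanged). If M1 and M2 are matchings stable under A but not under B, then their join M1 ∨_A M2 (each worker gets its less preferred partner) is also not stable under B. Hence M_A \ M_B is a join semi-sublattice of L_A. -/
import Mathlib


/-- A stable matching instance: each worker `w` ranks firms via `wr w` (lower rank =
more preferred, rank = position in the preference list) and each firm `f` ranks
workers via `fr f`. -/
structure SMInstance (W F : Type) where
  wr : W → F → ℕ
  fr : F → W → ℕ
  wr_inj : ∀ w, Function.Injective (wr w)
  fr_inj : ∀ f, Function.Injective (fr f)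

variable {W F : Type}

/-- `(w, f)` is a blocking pair for the matching `M` under instance `A`. -/
def SMInstance.Blocking (A : SMInstance W F) (M : W ≃ F) (w : W) (f : F) : Prop :=
  M w ≠ f ∧ A.wr w f < A.wr w (M w) ∧ A.fr f w < A.fr f (M.symm f)

/-- `M` is stable under `A`: it has no blocking pair. -/
def SMInstance.Stable (A : SMInstance W F) (M : W ≃ F) : Prop :=
  ∀ w f, ¬ A.Blocking M w f

/-- Pointwise "less preferred partner" (join) of two matchings, w.r.t. the worker
preferences of `A`. -/
def worse (A : SMInstance W F) (M1 M2 : W ≃ F) (w : W) : F :=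
  if A.wr w (M1 w) ≤ A.wr w (M2 w) then M2 w else M1 w

/-- Pointwise "more preferred partner" (meet) of two matchings, w.r.t. the worker
preferences of `A`. -/
def better (A : SMInstance W F) (M1 M2 : W ≃ F) (w : W) : F :=
  if A.wr w (M1 w) ≤ A.wr w (M2 w) then M1 w else M2 w

/-- If `B` is obtained from `A` by permuting the preference list of exactly one firm
`f0`, and `M1, M2` are stable under `A` but not under `B`, then their join w.r.t.
`A` (each worker gets its less preferred partner) is also not stable under `B`;
hence `M_A \ M_B` is a join semi-sublattice of `L_A`. -/
theorem stmt5 (A B : SMInstance W F) (hW : A.wr = B.wr) (f0 : F)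
    (hf : ∀ f, f ≠ f0 → A.fr f = B.fr f)
    (M1 M2 : W ≃ F)
    (h1A : A.Stable M1) (h1B : ¬ B.Stable M1)
    (h2A : A.Stable M2) (h2B : ¬ B.Stable M2) :
    ∀ Mj : W ≃ F, (∀ w, Mj w = worse A M1 M2 w) → ¬ B.Stable Mj := by

  intro Mj hMj hstab
  have key : ∀ M : W ≃ F, A.Stable M → ¬ B.Stable M → ∃ w, B.Blocking M w f0 := by
    intro M hA hB
    simp only [SMInstance.Stable, not_forall, not_not] at hB
    obtain ⟨w, f, hbl⟩ := hB
    refine ⟨w, ?_⟩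
    by_cases hf0 : f = f0
    · subst hf0; exact hbl
    · exact absurd ⟨hbl.1, by rw [hW]; exact hbl.2.1, by rw [hf f hf0]; exact hbl.2.2⟩ (hA w f)
  obtain ⟨w1, hb1⟩ := key M1 h1A h1B
  obtain ⟨w2, hb2⟩ := key M2 h2A h2B
  set u := Mj.symm f0 with hu_def
  have hu : Mj u = f0 := Mj.apply_symm_apply f0
  have hwu := hMj u
  rw [hu] at hwu
  unfold worse at hwu
  by_cases hcase : A.wr u (M1 u) ≤ A.wr u (M2 u)
  · rw [if_pos hcase] at hwu
    -- f0 = M2 u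
    have hM2u : M2 u = f0 := hwu.symm
    have hne : Mj w2 ≠ f0 := by
      intro h
      have : w2 = u := by
        have := Mj.injective (h.trans hu.symm); exact this
      rw [this] at hb2
      exact hb2.1 hM2u
    have hle : B.wr w2 (M2 w2) ≤ B.wr w2 (Mj w2) := by
      rw [hMj w2]; unfold worse
      rw [← hW]
      split_ifs with h
      · exact le_refl _
      · exact le_of_lt (lt_of_not_ge h)
    have hwr : B.wr w2 f0 < B.wr w2 (Mj w2) := lt_of_lt_of_le hb2.2.1 hle
    have hfr : B.fr f0 w2 < B.fr f0 (Mj.symm f0) := by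
      have : M2.symm f0 = u := by
        rw [← hM2u]; exact M2.symm_apply_apply u
      have h2 := hb2.2.2
      rw [this] at h2
      exact h2
    exact hstab w2 f0 ⟨hne, hwr, hfr⟩
  · rw [if_neg hcase] at hwu
    have hM1u : M1 u = f0 := hwu.symm
    have hne : Mj w1 ≠ f0 := by
      intro h
      have : w1 = u := Mj.injective (h.trans hu.symm)
      rw [this] at hb1
      exact hb1.1 hM1u
    have hle : B.wr w1 (M1 w1) ≤ B.wr w1 (Mj w1) := by
      rw [hMj w1]; unfold worse
      rw [← hW]
      split_ifs with h
      · exact h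
      · exact le_refl _
    have hwr : B.wr w1 f0 < B.wr w1 (Mj w1) := lt_of_lt_of_le hb1.2.1 hle
    have hfr : B.fr f0 w1 < B.fr f0 (Mj.symm f0) := by
      have : M1.symm f0 = u := by
        rw [← hM1u]; exact M1.symm_apply_apply u
      have h1 := hb1.2.2
      rw [this] at h1
      exact h1
    exact hstab w1 f0 ⟨hne, hwr, hfr⟩
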